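/- Let ψ be a generalized Kracht formula (with exactly one free variable) that begins with an existential restricted quantifier. Then ψ is equivalent (in every Kripke frame, under every assignment of its free variable, with atoms read via the # translation) to a quantifier-free formula built from atoms x_l ∈ E' with E' quasi-safe, using only ∧ and ∨. -/

import Mathlib

set_option autoImplicit true

universe u v w

/-- Modal formulas over modality indices `Λ` and propositional variables `V`. -/
inductive MF (Λ : Type u) (V : Type v) : Type (max u v)
  | var : V → MF Λ V
  | top : MF Λ V
  | bot : MF Λ V
  | and : MF Λ V → MF Λ V → MF Λ V
  | or  : MF Λ V → MF Λ V → MF Λ V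
  | neg : MF Λ V → MF Λ V
  | imp : MF Λ V → MF Λ V → MF Λ V
  | dia : Λ → MF Λ V → MF Λ V
  | box : Λ → MF Λ V → MF Λ V

namespace MF
variable {Λ : Type u} {V : Type v}

/-- The set of propositional variables occurring in a modal formula. -/
def vars : MF Λ V → Set V
  | var p => {p}
  | top => ∅
  | bot => ∅
  | and a b => vars a ∪ vars b
  | or a b => vars a ∪ vars b
  | neg a => vars a
  | imp a b => vars a ∪ vars b
  | dia _ a => vars a
  | box _ a => vars a

end MF

/-- Positive modal formulas: built without `¬` and `→`. -/
inductive Positive {Λ : Type u} {V : Type v} : MF Λ V → Prop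
  | var (p : V) : Positive (.var p)
  | top : Positive .top
  | bot : Positive .bot
  | and {a b} : Positive a → Positive b → Positive (.and a b)
  | or {a b} : Positive a → Positive b → Positive (.or a b)
  | dia (l) {a} : Positive a → Positive (.dia l a)
  | box (l) {a} : Positive a → Positive (.box l a)

/-- A Kripke frame with accessibility relations indexed by `Λ`. -/
structure Frame (Λ : Type u) where
  W : Type w
  R : Λ → W → W → Prop

/-- Kripke satisfaction `F, x, θ ⊨ φ`. -/
def sat {Λ : Type u} {V : Type v} (F : Frame Λ) (θ : V → Set F.W) : F.W → MF Λ V → Prop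
  | x, .var p => x ∈ θ p
  | _, .top => True
  | _, .bot => False
  | x, .and a b => sat F θ x a ∧ sat F θ x b
  | x, .or a b => sat F θ x a ∨ sat F θ x b
  | x, .neg a => ¬ sat F θ x a
  | x, .imp a b => sat F θ x a → sat F θ x b
  | x, .dia l a => ∃ y, F.R l x y ∧ sat F θ y a
  | x, .box l a => ∀ y, F.R l x y → sat F θ y a

/-- `BoxF φ p S`: `φ` is a box-formula with head `p`, in which the set of variables
occurring not as the head is `S`. -/
inductive BoxF {Λ : Type u} {V : Type v} : MF Λ V → V → Set V → Prop
  | var (p : V) : BoxF (.var p) p ∅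
  | imp {POS ψ p S} : Positive POS → BoxF ψ p S → BoxF (.imp POS ψ) p (MF.vars POS ∪ S)
  | box (l) {ψ p S} : BoxF ψ p S → BoxF (.box l ψ) p S

/-- `RegBF r φ p`: relative to the rank assignment `r`, `φ` is a regular box-formula
with head `p` (of rank `r p`): all variables of the positive antecedents have rank `< r p`. -/
inductive RegBF {Λ : Type u} {V : Type v} (r : V → ℕ) : MF Λ V → V → Prop
  | var (p : V) : RegBF r (.var p) p
  | imp {POS ψ p} : Positive POS → (∀ q ∈ MF.vars POS, r q < r p) →
      RegBF r ψ p → RegBF r (.imp POS ψ) p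
  | box (l) {ψ p} : RegBF r ψ p → RegBF r (.box l ψ) p

/-- The edge relation of the dependency graph of a set `A` of box-formulas:
`p → q` iff `p` occurs (not as the head) in some member of `A` with head `q`. -/
def depEdge {Λ : Type u} {V : Type v} (A : Set (MF Λ V)) (p q : V) : Prop :=
  ∃ φ ∈ A, ∃ S, BoxF φ q S ∧ p ∈ S

/-- A set of box-formulas is regular if its dependency graph has no oriented cycle. -/
def RegularSet {Λ : Type u} {V : Type v} (A : Set (MF Λ V)) : Prop :=
  ∀ p : V, ¬ Relation.TransGen (depEdge A) p p

/-- `R_λ^{-1}(A) = {u : ∃ v, u R_λ v ∧ v ∈ A}`. -/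
def Rinv {Λ : Type u} (F : Frame Λ) (l : Λ) (A : Set F.W) : Set F.W :=
  {u | ∃ v, F.R l u v ∧ v ∈ A}

/-- `R_λ^□(A) = {u : ∀ v, u R_λ v → v ∈ A}`. -/
def RboxOp {Λ : Type u} (F : Frame Λ) (l : Λ) (A : Set F.W) : Set F.W :=
  {u | ∀ v, F.R l u v → v ∈ A}

/-- `R_λ(A) = {u : ∃ v, v R_λ u ∧ v ∈ A}`. -/
def Rfwd {Λ : Type u} (F : Frame Λ) (l : Λ) (A : Set F.W) : Set F.W :=
  {u | ∃ v, F.R l v u ∧ v ∈ A}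

/-- The interpretation of the expression `KP^{POS}` in a frame `F`, the set variables
`P^l_i` being interpreted by `P`.  (Junk value `∅` on non-positive constructors.) -/
def KPsem {Λ : Type u} (F : Frame Λ) (P : ℕ × ℕ → Set F.W) : MF Λ (ℕ × ℕ) → Set F.W
  | .var q => P q
  | .top => Set.univ
  | .bot => ∅
  | .and a b => KPsem F P a ∩ KPsem F P b
  | .or a b => KPsem F P a ∪ KPsem F P b
  | .dia l a => Rinv F l (KPsem F P a)
  | .box l a => RboxOp F l (KPsem F P a)
  | .neg _ => ∅
  | .imp _ _ => ∅

/-- The interpretation of the expression `KV^φ` in a frame `F`: the set variables `P^l_i`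
are interpreted by `P` and the extra variable `#` by the second argument.
(Junk value `∅` on constructors that do not occur in regular box-formulas.) -/
def KVsem {Λ : Type u} (F : Frame Λ) (P : ℕ × ℕ → Set F.W) : MF Λ (ℕ × ℕ) → Set F.W → Set F.W
  | .var _, X => X
  | .imp POS ψ, X => KVsem F P ψ (X ∩ KPsem F P POS)
  | .box l ψ, X => KVsem F P ψ (Rfwd F l X)
  | _, _ => ∅

/-- The semantic minimal valuation: given points `g j` and sets `f j` of regular
box-formulas to be verified at `g j`, `thetaMinSem F g f k i` is the minimal value of the
variable `p^k_i`; it is defined by recursion on the rank `k` as the union, over all `j` and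
all `φ ∈ f j` with head `p^k_i`, of `KV^φ(g j)` computed with the minimal values of the
variables of lower rank. -/
noncomputable def thetaMinSem {Λ : Type u} (F : Frame Λ) {ι : Type w} (g : ι → F.W)
    (f : ι → Set (MF Λ (ℕ × ℕ))) : ℕ → ℕ → Set F.W :=
  fun k => Nat.strongRecOn (motive := fun _ => ℕ → Set F.W) k fun k ih i =>
    ⋃ (j : ι), ⋃ φ ∈ f j, ⋃ (_ : RegBF Prod.fst φ (k, i)),
      KVsem F (fun q => if h : q.1 < k then ih q.1 h q.2 else ∅) φ {g j}

/-- `L`-expressions: terms of the language `L` with individual variables `x_i` (`i : ℕ`),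
constants `⊤, ⊥`, unary `R_λ^{-1}`, `R_λ^□`, `R_λ` and binary `∩`, `∪`. -/
inductive LExp (Λ : Type u) : Type u
  | var : ℕ → LExp Λ
  | top : LExp Λ
  | bot : LExp Λ
  | inter : LExp Λ → LExp Λ → LExp Λ
  | union : LExp Λ → LExp Λ → LExp Λ
  | rinv : Λ → LExp Λ → LExp Λ
  | rbox : Λ → LExp Λ → LExp Λ
  | rfw : Λ → LExp Λ → LExp Λ

namespace LExp
variable {Λ : Type u}

/-- Denotation of an `L`-expression in a frame `F`, the variable `x_i` denoting the
singleton of the point `g i`. -/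
def den (F : Frame Λ) (g : ℕ → F.W) : LExp Λ → Set F.W
  | var i => {g i}
  | top => Set.univ
  | bot => ∅
  | inter a b => den F g a ∩ den F g b
  | union a b => den F g a ∪ den F g b
  | rinv l a => Rinv F l (den F g a)
  | rbox l a => RboxOp F l (den F g a)
  | rfw l a => Rfwd F l (den F g a)

/-- The set of (indices of) individual variables occurring in an `L`-expression. -/
def evars : LExp Λ → Set ℕ
  | var i => {i}
  | top => ∅
  | bot => ∅
  | inter a b => evars a ∪ evars b
  | union a b => evars a ∪ evars b
  | rinv _ a => evars a
  | rbox _ a => evars a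
  | rfw _ a => evars a

end LExp

/-- The subexpression relation on `L`-expressions. -/
inductive Subexp {Λ : Type u} : LExp Λ → LExp Λ → Prop
  | refl (e : LExp Λ) : Subexp e e
  | interL {e a b} : Subexp e a → Subexp e (.inter a b)
  | interR {e a b} : Subexp e b → Subexp e (.inter a b)
  | unionL {e a b} : Subexp e a → Subexp e (.union a b)
  | unionR {e a b} : Subexp e b → Subexp e (.union a b)
  | rinv (l) {e a} : Subexp e a → Subexp e (.rinv l a)
  | rbox (l) {e a} : Subexp e a → Subexp e (.rbox l a)
  | rfw (l) {e a} : Subexp e a → Subexp e (.rfw l a)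

/-- `SafeFor e`: `e` is "safe for" the ambient expression, i.e. `e` is a variable, or
`R_λ(e')` with `e'` safe for it, or an intersection one of whose components is safe for it. -/
inductive SafeFor {Λ : Type u} : LExp Λ → Prop
  | var (i : ℕ) : SafeFor (.var i)
  | rfw (l) {a} : SafeFor a → SafeFor (.rfw l a)
  | interL {a b} : SafeFor a → SafeFor (.inter a b)
  | interR {a b} : SafeFor b → SafeFor (.inter a b)

/-- An `L`-expression is safe if it is safe for itself and the argument of every
subexpression of the form `R_λ(ψ)` is safe for it. -/
def Safe {Λ : Type u} (e : LExp Λ) : Prop :=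
  SafeFor e ∧ ∀ l a, Subexp (.rfw l a) e → SafeFor a

mutual
  /-- The class `K`: the least class of `L`-expressions containing the variables and closed
  under `S ↦ R_λ(S)` and `S ↦ S ∩ E` for `E` a positive combination of members of `K`. -/
  inductive InK {Λ : Type u} : LExp Λ → Prop
    | var (i : ℕ) : InK (.var i)
    | rfw (l : Λ) {S : LExp Λ} : InK S → InK (.rfw l S)
    | inter {S E : LExp Λ} : InK S → PosOfK E → InK (.inter S E)
  /-- Positive combinations of members of `K`: built from members of `K` using only
  `∩`, `∪`, `R_λ^{-1}`, `R_λ^□`, `⊤`, `⊥`. -/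
  inductive PosOfK {Λ : Type u} : LExp Λ → Prop
    | ofK {e : LExp Λ} : InK e → PosOfK e
    | top : PosOfK .top
    | bot : PosOfK .bot
    | inter {a b} : PosOfK a → PosOfK b → PosOfK (.inter a b)
    | union {a b} : PosOfK a → PosOfK b → PosOfK (.union a b)
    | rinv (l) {a} : PosOfK a → PosOfK (.rinv l a)
    | rbox (l) {a} : PosOfK a → PosOfK (.rbox l a)
end

/-- Quasi-safe `L`-expressions: positive combinations of safe expressions, i.e. built from
safe expressions using only `∩`, `∪`, `R_λ^{-1}`, `R_λ^□`, `⊤`, `⊥`. -/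
inductive QuasiSafe {Λ : Type u} : LExp Λ → Prop
  | safe {e : LExp Λ} : Safe e → QuasiSafe e
  | top : QuasiSafe .top
  | bot : QuasiSafe .bot
  | inter {a b} : QuasiSafe a → QuasiSafe b → QuasiSafe (.inter a b)
  | union {a b} : QuasiSafe a → QuasiSafe b → QuasiSafe (.union a b)
  | rinv (l) {a} : QuasiSafe a → QuasiSafe (.rinv l a)
  | rbox (l) {a} : QuasiSafe a → QuasiSafe (.rbox l a)

/-- `ReplOne i ψ φ φ'`: `φ'` is the result of replacing one occurrence of the variable
`x_i` in `φ` by `ψ`. -/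
inductive ReplOne {Λ : Type u} (i : ℕ) (ψ : LExp Λ) : LExp Λ → LExp Λ → Prop
  | here : ReplOne i ψ (.var i) ψ
  | interL {a a' b} : ReplOne i ψ a a' → ReplOne i ψ (.inter a b) (.inter a' b)
  | interR {a b b'} : ReplOne i ψ b b' → ReplOne i ψ (.inter a b) (.inter a b')
  | unionL {a a' b} : ReplOne i ψ a a' → ReplOne i ψ (.union a b) (.union a' b)
  | unionR {a b b'} : ReplOne i ψ b b' → ReplOne i ψ (.union a b) (.union a b')
  | rinv (l) {a a'} : ReplOne i ψ a a' → ReplOne i ψ (.rinv l a) (.rinv l a')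
  | rbox (l) {a a'} : ReplOne i ψ a a' → ReplOne i ψ (.rbox l a) (.rbox l a')
  | rfw (l) {a a'} : ReplOne i ψ a a' → ReplOne i ψ (.rfw l a) (.rfw l a')

/-- A finite union of `L`-expressions (empty union is `⊥`). -/
def unionList {Λ : Type u} : List (LExp Λ) → LExp Λ
  | [] => .bot
  | e :: es => .union e (unionList es)

/-- `UnionOfSafe e`: `e` is a finite union of safe expressions. -/
inductive UnionOfSafe {Λ : Type u} : LExp Λ → Prop
  | bot : UnionOfSafe .bot
  | safe {e : LExp Λ} : Safe e → UnionOfSafe e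
  | union {a b} : UnionOfSafe a → UnionOfSafe b → UnionOfSafe (.union a b)

/-- Syntactic `KP^{POS}`: the `L`-expression obtained from the positive formula `POS` by
replacing each set variable `P^l_i` by the `L`-expression `KF (l, i)`.
(Junk value on non-positive constructors.) -/
def KPsub {Λ : Type u} (KF : ℕ × ℕ → LExp Λ) : MF Λ (ℕ × ℕ) → LExp Λ
  | .var q => KF q
  | .top => .top
  | .bot => .bot
  | .and a b => .inter (KPsub KF a) (KPsub KF b)
  | .or a b => .union (KPsub KF a) (KPsub KF b)
  | .dia l a => .rinv l (KPsub KF a)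
  | .box l a => .rbox l (KPsub KF a)
  | .neg _ => .bot
  | .imp _ _ => .bot

/-- Syntactic `KVF^φ(t)`: the `L`-expression obtained from `KV^φ` by substituting the
`L`-expression `t` for `#` and `KF (l, i)` for each set variable `P^l_i`.
(Junk value on constructors that do not occur in regular box-formulas.) -/
def KVFsyn {Λ : Type u} (KF : ℕ × ℕ → LExp Λ) : MF Λ (ℕ × ℕ) → LExp Λ → LExp Λ
  | .var _, t => t
  | .imp POS ψ, t => KVFsyn KF ψ (.inter t (KPsub KF POS))
  | .box l ψ, t => KVFsyn KF ψ (.rfw l t)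
  | _, _ => .bot

open scoped Classical in
/-- The syntactic minimal valuation `KF_f^{p^k_i}` for variables `x_0, …, x_{n-1}` and
`f` assigning to each variable a finite set of regular box-formulas: defined by recursion on
the rank `k` as the union, over all `j < n` and all `φ ∈ f j` with head `p^k_i`, of
`KVF_f^φ(x_j)`, which is `KV^φ` with `x_j` substituted for `#` and `KF_f^{p^l_m}`
substituted for each `P^l_m` with `l < k`. -/
noncomputable def KFsyn {Λ : Type u} (n : ℕ) (f : ℕ → Finset (MF Λ (ℕ × ℕ))) :
    ℕ → ℕ → LExp Λ :=
  fun k => Nat.strongRecOn (motive := fun _ => ℕ → LExp Λ) k fun k ih i =>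
    unionList (((List.range n).flatMap fun j =>
      ((f j).toList.filter fun φ => decide (RegBF Prod.fst φ (k, i))).map fun φ =>
        KVFsyn (fun q => if h : q.1 < k then ih q.1 h q.2 else LExp.bot) φ (LExp.var j)))

/-- The expressions substituted for the set variables `P^l_m`, `l < k`, in `KVF`:
the syntactic minimal valuations of the lower ranks. -/
noncomputable def lowKF {Λ : Type u} (n : ℕ) (f : ℕ → Finset (MF Λ (ℕ × ℕ))) (k : ℕ) :
    ℕ × ℕ → LExp Λ :=
  fun q => if q.1 < k then KFsyn n f q.1 q.2 else LExp.bot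

/-- `KVFat n f φ j k` is the `L`-expression `KVF_f^φ(x_j)` for `φ` a regular box-formula
of rank `k`. -/
noncomputable def KVFat {Λ : Type u} (n : ℕ) (f : ℕ → Finset (MF Λ (ℕ × ℕ)))
    (φ : MF Λ (ℕ × ℕ)) (j k : ℕ) : LExp Λ :=
  KVFsyn (lowKF n f k) φ (.var j)

/-- A labelled tree-like structure: a set of vertices with relations indexed by `Λ`,
a root, and a label function assigning to every vertex a set of labels from `α`. -/
structure LabTree (Λ : Type u) (α : Type v) where
  V : Type
  R : Λ → V → V → Prop
  root : V
  label : V → Set α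

/-- Derivation trees witnessing that a formula is built from base formulas using only
`∧` and `◇_λ`. -/
inductive BuiltT (Λ : Type u) (V : Type v) : Type (max u v)
  | base : MF Λ V → BuiltT Λ V
  | and : BuiltT Λ V → BuiltT Λ V → BuiltT Λ V
  | dia : Λ → BuiltT Λ V → BuiltT Λ V

/-- The modal formula described by a derivation tree. -/
def BuiltT.formula {Λ : Type u} {V : Type v} : BuiltT Λ V → MF Λ V
  | base φ => φ
  | and a b => .and a.formula b.formula
  | dia l a => .dia l a.formula

/-- The derivation tree uses only base formulas from `A`. -/
def BuiltT.Ok {Λ : Type u} {V : Type v} (A : Set (MF Λ V)) : BuiltT Λ V → Prop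
  | base φ => φ ∈ A
  | and a b => a.Ok A ∧ b.Ok A
  | dia _ a => a.Ok A

/-- Helper for gluing two labelled trees at their roots: the relation on the disjoint sum,
with the edges out of the second root re-attached to the first root. -/
def glueR {Λ : Type u} {W₁ W₂ : Type} (R₁ : Λ → W₁ → W₁ → Prop) (R₂ : Λ → W₂ → W₂ → Prop)
    (r₁ : W₁) (r₂ : W₂) (l : Λ) : W₁ ⊕ W₂ → W₁ ⊕ W₂ → Prop
  | Sum.inl a, Sum.inl b => R₁ l a b
  | Sum.inr a, Sum.inr b => R₂ l a b
  | Sum.inl a, Sum.inr b => a = r₁ ∧ R₂ l r₂ b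
  | Sum.inr _, Sum.inl _ => False

open Classical in
/-- Helper for gluing two labelled trees at their roots: the label function, the glued root
receiving the union of the two root labels. -/
noncomputable def glueLab {α : Type w} {W₁ W₂ : Type} (L₁ : W₁ → Set α) (L₂ : W₂ → Set α)
    (r₁ : W₁) (r₂ : W₂) : W₁ ⊕ W₂ → Set α
  | Sum.inl a => if a = r₁ then L₁ r₁ ∪ L₂ r₂ else L₁ a
  | Sum.inr b => L₂ b

/-- Helper for prefixing a labelled tree with a new root: the relation on `Option W`,
with an `R_{l₀}`-edge from the new root `none` to the old root `r`. -/
def prefR {Λ : Type u} {W : Type} (R : Λ → W → W → Prop) (l₀ : Λ) (r : W) (l : Λ) :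
    Option W → Option W → Prop
  | none, some w => l = l₀ ∧ w = r
  | some a, some b => R l a b
  | _, _ => False

/-- Helper for prefixing a labelled tree with a new root: the label function, the new root
getting the empty label. -/
def prefLab {α : Type w} {W : Type} (L : W → Set α) : Option W → Set α
  | none => ∅
  | some a => L a

/-- The reduced syntactical tree of a formula built from base formulas using `∧` and `◇_λ`:
a single root labelled `{a}` for a base formula `a`; for a conjunction, the two trees
with their roots identified (labels united); for `◇_λ ψ`, a new root with empty label and an
`R_λ`-edge to the root of the tree of `ψ`. -/
noncomputable def TreeOf {Λ : Type u} {V : Type v} : BuiltT Λ V → LabTree Λ (MF Λ V)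
  | .base φ =>
      { V := Unit, R := fun _ _ _ => False, root := (), label := fun _ => {φ} }
  | .and b₁ b₂ =>
      let T₁ := TreeOf b₁
      let T₂ := TreeOf b₂
      { V := {v : T₁.V ⊕ T₂.V // v ≠ Sum.inr T₂.root},
        R := fun l u v => glueR T₁.R T₂.R T₁.root T₂.root l u.1 v.1,
        root := ⟨Sum.inl T₁.root, by exact Sum.inl_ne_inr⟩,
        label := fun v => glueLab T₁.label T₂.label T₁.root T₂.root v.1 }
  | .dia l b =>
      let T := TreeOf b
      { V := Option T.V,
        R := fun l' u v => prefR T.R l T.root l' u v,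
        root := none,
        label := fun v => prefLab T.label v }

/-- Restrictedly positive first-order formulas over the frame language: built from atoms
`y ∈ E` (`E` an `L`-expression) using `∧`, `∨` and the restricted quantifiers
`(∀ y ◁_λ x)` and `(∃ y ◁_λ x)`. -/
inductive KrF (Λ : Type u) : Type u
  | atom : ℕ → LExp Λ → KrF Λ
  | and : KrF Λ → KrF Λ → KrF Λ
  | or : KrF Λ → KrF Λ → KrF Λ
  | all : ℕ → Λ → ℕ → KrF Λ → KrF Λ
  | ex : ℕ → Λ → ℕ → KrF Λ → KrF Λ

namespace KrF
variable {Λ : Type u}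

/-- Truth of a restrictedly positive formula in a frame under an assignment `g` of points to
individual variables; the atom `y ∈ E` is read via the `#`-translation, i.e. as membership
of `g y` in the denotation of `E`. -/
def holds (F : Frame Λ) : (ℕ → F.W) → KrF Λ → Prop
  | g, atom y E => g y ∈ E.den F g
  | g, and a b => holds F g a ∧ holds F g b
  | g, or a b => holds F g a ∨ holds F g b
  | g, all y l x β => ∀ w, F.R l (g x) w → holds F (Function.update g y w) β
  | g, ex y l x β => ∃ w, F.R l (g x) w ∧ holds F (Function.update g y w) β

/-- Free variables. -/
def fv : KrF Λ → Set ℕ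
  | atom y E => insert y E.evars
  | and a b => fv a ∪ fv b
  | or a b => fv a ∪ fv b
  | all y _ x β => insert x (fv β \ {y})
  | ex y _ x β => insert x (fv β \ {y})

/-- Bound variables. -/
def bv : KrF Λ → Set ℕ
  | atom _ _ => ∅
  | and a b => bv a ∪ bv b
  | or a b => bv a ∪ bv b
  | all y _ _ β => insert y (bv β)
  | ex y _ _ β => insert y (bv β)

/-- No two distinct quantifier occurrences bind the same variable. -/
def CleanBound : KrF Λ → Prop
  | atom _ _ => True
  | and a b => CleanBound a ∧ CleanBound b ∧ bv a ∩ bv b = ∅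
  | or a b => CleanBound a ∧ CleanBound b ∧ bv a ∩ bv b = ∅
  | all y _ _ β => CleanBound β ∧ y ∉ bv β
  | ex y _ _ β => CleanBound β ∧ y ∉ bv β

/-- Clean formulas: no variable occurs both free and bound, and no two distinct quantifier
occurrences bind the same variable. -/
def Clean (φ : KrF Λ) : Prop := fv φ ∩ bv φ = ∅ ∧ CleanBound φ

/-- All the `L`-expressions occurring in atoms of the formula satisfy `P`. -/
def AtomsAll (P : LExp Λ → Prop) : KrF Λ → Prop
  | atom _ E => P E
  | and a b => AtomsAll P a ∧ AtomsAll P b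
  | or a b => AtomsAll P a ∧ AtomsAll P b
  | all _ _ _ β => AtomsAll P β
  | ex _ _ _ β => AtomsAll P β

/-- Quantifier-free formulas (built from atoms using only `∧` and `∨`). -/
def QFree : KrF Λ → Prop
  | atom _ _ => True
  | and a b => QFree a ∧ QFree b
  | or a b => QFree a ∧ QFree b
  | all _ _ _ _ => False
  | ex _ _ _ _ => False

/-- Formulas built from atoms using only `∧`, `∨` and restricted universal quantification
(no existential quantifier). -/
def NoEx : KrF Λ → Prop
  | atom _ _ => True
  | and a b => NoEx a ∧ NoEx b
  | or a b => NoEx a ∧ NoEx b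
  | all _ _ _ β => NoEx β
  | ex _ _ _ _ => False

/-- `GKok U e φ`: every variable occurring in an `L`-expression of an atom of `φ` is
inherently universal. Here `U` is the set of variables that are inherently universal so far
(initially the free variables) and `e` records whether we are within the scope of an
existential quantifier. -/
def GKok : Set ℕ → Bool → KrF Λ → Prop
  | U, _, atom _ E => E.evars ⊆ U
  | U, e, and a b => GKok U e a ∧ GKok U e b
  | U, e, or a b => GKok U e a ∧ GKok U e b
  | U, false, all y _ _ β => GKok (insert y U) false β
  | U, true, all _ _ _ β => GKok U true β
  | U, _, ex _ _ _ β => GKok U true β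

end KrF

/-- A generalized Kracht formula with free variables: clean, restrictedly positive with safe
atoms, and in every atom `y ∈ E` all variables of `E` are inherently universal. -/
def IsGenKrachtFV {Λ : Type u} (α : KrF Λ) : Prop :=
  α.Clean ∧ α.AtomsAll Safe ∧ α.GKok α.fv false

/-- A generalized Kracht formula: a generalized Kracht formula with free variables whose
only free variable is `x0`. -/
def IsGenKracht {Λ : Type u} (α : KrF Λ) (x0 : ℕ) : Prop :=
  IsGenKrachtFV α ∧ α.fv = {x0}

/-- Generalized Sahlqvist antecedents: built from regular box-formulas and negative
formulas using only `∧`, `∨`, `◇_λ`. -/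
inductive GSAnt {Λ : Type u} : MF Λ (ℕ × ℕ) → Prop
  | reg {φ p} : RegBF Prod.fst φ p → GSAnt φ
  | neg {φ} : Positive φ → GSAnt (.neg φ)
  | and {a b} : GSAnt a → GSAnt b → GSAnt (.and a b)
  | or {a b} : GSAnt a → GSAnt b → GSAnt (.or a b)
  | dia (l) {a} : GSAnt a → GSAnt (.dia l a)

/-- Generalized Sahlqvist formulas: built from generalized Sahlqvist implications
`GSA → ⊥` by applying boxes and conjunctions, and disjunctions only to formulas without
common propositional variables. -/
inductive GSF {Λ : Type u} : MF Λ (ℕ × ℕ) → Prop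
  | impl {a} : GSAnt a → GSF (.imp a .bot)
  | box (l) {a} : GSF a → GSF (.box l a)
  | and {a b} : GSF a → GSF b → GSF (.and a b)
  | or {a b} : GSF a → GSF b → MF.vars a ∩ MF.vars b = ∅ → GSF (.or a b)

open Classical in
/-- The modal translation `E^T` of a quasi-safe expression: safe subexpressions are
replaced by their associated propositional variables `p_E`, and `∩, ∪, R^{-1}_λ, R^□_λ`
become `∧, ∨, ◇_λ, □_λ`. -/
noncomputable def Etrans {Λ : Type u} (pE : LExp Λ → ℕ × ℕ) : LExp Λ → MF Λ (ℕ × ℕ)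
  | .var i => .var (pE (.var i))
  | .top => .top
  | .bot => .bot
  | .inter a b =>
      if Safe (LExp.inter a b) then .var (pE (.inter a b))
      else .and (Etrans pE a) (Etrans pE b)
  | .union a b =>
      if Safe (LExp.union a b) then .var (pE (.union a b))
      else .or (Etrans pE a) (Etrans pE b)
  | .rinv l a =>
      if Safe (LExp.rinv l a) then .var (pE (.rinv l a)) else .dia l (Etrans pE a)
  | .rbox l a =>
      if Safe (LExp.rbox l a) then .var (pE (.rbox l a)) else .box l (Etrans pE a)
  | .rfw l a => if Safe (LExp.rfw l a) then .var (pE (.rfw l a)) else .bot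

/-- A finite disjunction of modal formulas (empty disjunction is `⊥`). -/
def orList {Λ : Type u} {V : Type v} : List (MF Λ V) → MF Λ V
  | [] => .bot
  | a :: as => .or a (orList as)

section Statement16Aux

variable {Λ : Type u}

/-- A finite intersection of `L`-expressions (empty intersection is `⊤`). -/
def interListE : List (LExp Λ) → LExp Λ
  | [] => .top
  | e :: es => .inter e (interListE es)

/-- Truth of a conjunction of atoms. -/
def holdsC (F : Frame Λ) (g : ℕ → F.W) (c : List (ℕ × LExp Λ)) : Prop :=
  ∀ a ∈ c, g a.1 ∈ a.2.den F g

/-- Truth of a disjunction (clause) of atoms. -/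
def holdsCl (F : Frame Λ) (g : ℕ → F.W) (c : List (ℕ × LExp Λ)) : Prop :=
  ∃ a ∈ c, g a.1 ∈ a.2.den F g

/-- Truth of a DNF. -/
def holdsD (F : Frame Λ) (g : ℕ → F.W) (D : List (List (ℕ × LExp Λ))) : Prop :=
  ∃ c ∈ D, holdsC F g c

/-- Truth of a CNF. -/
def holdsCN (F : Frame Λ) (g : ℕ → F.W) (D : List (List (ℕ × LExp Λ))) : Prop :=
  ∀ c ∈ D, holdsCl F g c

/-- Distribution: converts a DNF to a CNF and vice versa. -/
def distribL {α : Type*} : List (List α) → List (List α)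
  | [] => [[]]
  | c :: D => c.flatMap fun a => (distribL D).map (a :: ·)

lemma mem_distribL {α : Type*} {a : α} : ∀ {D : List (List α)} {d : List α},
    d ∈ distribL D → a ∈ d → ∃ c ∈ D, a ∈ c := by
  intro D
  induction D with
  | nil =>
    intro d hd ha
    simp [distribL] at hd
    subst hd; simp at ha
  | cons c D ih =>
    intro d hd ha
    simp only [distribL, List.mem_flatMap, List.mem_map] at hd
    obtain ⟨b, hb, d', hd', rfl⟩ := hd
    rcases List.mem_cons.1 ha with rfl | ha'
    · exact ⟨c, List.mem_cons_self, hb⟩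
    · obtain ⟨c', hc', ha''⟩ := ih hd' ha'
      exact ⟨c', List.mem_cons_of_mem _ hc', ha''⟩

lemma holdsCN_distribL (F : Frame Λ) (g : ℕ → F.W) :
    ∀ D : List (List (ℕ × LExp Λ)), (holdsCN F g (distribL D) ↔ holdsD F g D) := by
  intro D
  induction D with
  | nil => simp [distribL, holdsCN, holdsD, holdsCl]
  | cons c D ih =>
    simp only [distribL, holdsCN, holdsD]
    constructor
    · intro h
      by_cases hc : holdsC F g c
      · exact ⟨c, List.mem_cons_self, hc⟩
      · simp only [holdsC] at hc
        push_neg at hc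
        obtain ⟨a, ha, hna⟩ := hc
        have : ∀ d ∈ distribL D, holdsCl F g d := by
          intro d hd
          have := h (a :: d) (by
            simp only [List.mem_flatMap, List.mem_map]
            exact ⟨a, ha, d, hd, rfl⟩)
          rcases this with ⟨b, hb, hbsat⟩
          rcases List.mem_cons.1 hb with rfl | hb'
          · exact absurd hbsat (by simpa using hna)
          · exact ⟨b, hb', hbsat⟩
        obtain ⟨d, hd, hdsat⟩ := (ih.1 this)
        exact ⟨d, List.mem_cons_of_mem _ hd, hdsat⟩
    · rintro ⟨c', hc', hsat⟩ d hd
      simp only [List.mem_flatMap, List.mem_map] at hd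
      obtain ⟨a, ha, d', hd', rfl⟩ := hd
      rcases List.mem_cons.1 hc' with rfl | hc''
      · exact ⟨a, List.mem_cons_self, hsat a ha⟩
      · obtain ⟨b, hb, hbsat⟩ := ih.2 ⟨c', hc'', hsat⟩ d' hd'
        exact ⟨b, List.mem_cons_of_mem _ hb, hbsat⟩

lemma holdsD_distribL (F : Frame Λ) (g : ℕ → F.W) :
    ∀ D : List (List (ℕ × LExp Λ)), (holdsD F g (distribL D) ↔ holdsCN F g D) := by
  intro D
  induction D with
  | nil => simp [distribL, holdsCN, holdsD, holdsC]
  | cons c D ih =>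
    simp only [distribL, holdsD, holdsCN]
    constructor
    · rintro ⟨d, hd, hsat⟩
      simp only [List.mem_flatMap, List.mem_map] at hd
      obtain ⟨a, ha, d', hd', rfl⟩ := hd
      intro e he
      rcases List.mem_cons.1 he with rfl | he'
      · exact ⟨a, ha, hsat a (List.mem_cons_self)⟩
      · exact ih.1 ⟨d', hd', fun b hb => hsat b (List.mem_cons_of_mem _ hb)⟩ e he'
    · intro h
      obtain ⟨a, ha, hasat⟩ := h c (List.mem_cons_self)
      obtain ⟨d, hd, hdsat⟩ := ih.2 (fun e he => h e (List.mem_cons_of_mem _ he))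
      refine ⟨a :: d, ?_, ?_⟩
      · simp only [List.mem_flatMap, List.mem_map]
        exact ⟨a, ha, d, hd, rfl⟩
      · intro b hb
        rcases List.mem_cons.1 hb with rfl | hb'
        · exact hasat
        · exact hdsat b hb'

/-- The existential-quantifier elimination step on a conjunction of atoms. -/
def exStep (y : ℕ) (l : Λ) (x : ℕ) (c : List (ℕ × LExp Λ)) : List (ℕ × LExp Λ) :=
  (c.filter fun a => !(a.1 == y)) ++
    [(x, .rinv l (interListE ((c.filter fun a => a.1 == y).map (·.2))))]

/-- The universal-quantifier elimination step on a clause of atoms. -/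
def allStep (y : ℕ) (l : Λ) (x : ℕ) (c : List (ℕ × LExp Λ)) : List (ℕ × LExp Λ) :=
  (c.filter fun a => !(a.1 == y)) ++
    [(x, .rbox l (unionList ((c.filter fun a => a.1 == y).map (·.2))))]

/-- Quantifier elimination, producing a DNF. -/
def elimD : KrF Λ → List (List (ℕ × LExp Λ))
  | .atom y E => [[(y, E)]]
  | .and a b => (elimD a).flatMap fun c => (elimD b).map (c ++ ·)
  | .or a b => elimD a ++ elimD b
  | .ex y l x β => (elimD β).map (exStep y l x)
  | .all y l x β => distribL ((distribL (elimD β)).map (allStep y l x))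

/-- The invariant guaranteeing correctness of `elimD`: all expressions of atoms have
variables in `U`, and quantified variables are outside `U` and differ from the
corresponding restriction variables. -/
inductive GoodK (U : Set ℕ) : KrF Λ → Prop
  | atom {y E} : LExp.evars E ⊆ U → GoodK U (.atom y E)
  | and {a b} : GoodK U a → GoodK U b → GoodK U (.and a b)
  | or {a b} : GoodK U a → GoodK U b → GoodK U (.or a b)
  | all {y l x β} : y ∉ U → x ≠ y → GoodK U β → GoodK U (.all y l x β)
  | ex {y l x β} : y ∉ U → x ≠ y → GoodK U β → GoodK U (.ex y l x β)

lemma interListE_prop {Q : LExp Λ → Prop} (htop : Q .top)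
    (hinter : ∀ {a b}, Q a → Q b → Q (.inter a b)) :
    ∀ {L : List (LExp Λ)}, (∀ e ∈ L, Q e) → Q (interListE L) := by
  intro L
  induction L with
  | nil => intro _; exact htop
  | cons e L ih =>
    intro h
    exact hinter (h e (List.mem_cons_self)) (ih fun e' he' => h e' (List.mem_cons_of_mem _ he'))

lemma unionList_prop {Q : LExp Λ → Prop} (hbot : Q .bot)
    (hunion : ∀ {a b}, Q a → Q b → Q (.union a b)) :
    ∀ {L : List (LExp Λ)}, (∀ e ∈ L, Q e) → Q (unionList L) := by
  intro L
  induction L with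
  | nil => intro _; exact hbot
  | cons e L ih =>
    intro h
    exact hunion (h e (List.mem_cons_self)) (ih fun e' he' => h e' (List.mem_cons_of_mem _ he'))

/-- All atoms of the eliminated form satisfy `Q`, for any `Q` closed under the relevant
operations. -/
lemma elimD_atoms {Q : LExp Λ → Prop} (htop : Q .top) (hbot : Q .bot)
    (hinter : ∀ {a b}, Q a → Q b → Q (.inter a b))
    (hunion : ∀ {a b}, Q a → Q b → Q (.union a b))
    (hrinv : ∀ (l) {a}, Q a → Q (.rinv l a))
    (hrbox : ∀ (l) {a}, Q a → Q (.rbox l a)) :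
    ∀ {φ : KrF Λ}, φ.AtomsAll Q → ∀ c ∈ elimD φ, ∀ a ∈ c, Q a.2 := by
  intro φ
  induction φ with
  | atom y E =>
    intro h c hc a ha
    simp only [elimD, List.mem_singleton] at hc
    subst hc
    simp only [List.mem_singleton] at ha
    subst ha; exact h
  | and p q ihp ihq =>
    intro h c hc a ha
    simp only [elimD, List.mem_flatMap, List.mem_map] at hc
    obtain ⟨c₁, hc₁, c₂, hc₂, rfl⟩ := hc
    rcases List.mem_append.1 ha with h' | h'
    · exact ihp h.1 c₁ hc₁ a h'
    · exact ihq h.2 c₂ hc₂ a h'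
  | or p q ihp ihq =>
    intro h c hc a ha
    rcases List.mem_append.1 hc with h' | h'
    · exact ihp h.1 c h' a ha
    · exact ihq h.2 c h' a ha
  | ex y l x β ih =>
    intro h c hc a ha
    simp only [elimD, List.mem_map] at hc
    obtain ⟨c', hc', rfl⟩ := hc
    rcases List.mem_append.1 ha with h' | h'
    · exact ih h c' hc' a (List.mem_of_mem_filter h')
    · simp only [List.mem_singleton] at h'
      subst h'
      refine hrinv l (interListE_prop htop hinter ?_)
      intro e he
      simp only [List.mem_map] at he
      obtain ⟨b, hb, rfl⟩ := he
      exact ih h c' hc' b (List.mem_of_mem_filter hb)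
  | all y l x β ih =>
    intro h c hc a ha
    obtain ⟨c', hc', ha'⟩ := mem_distribL hc ha
    simp only [List.mem_map] at hc'
    obtain ⟨d, hd, rfl⟩ := hc'
    rcases List.mem_append.1 ha' with h' | h'
    · obtain ⟨c'', hc'', ha''⟩ := mem_distribL hd (List.mem_of_mem_filter h')
      exact ih h c'' hc'' a ha''
    · simp only [List.mem_singleton] at h'
      subst h'
      refine hrbox l (unionList_prop hbot hunion ?_)
      intro e he
      simp only [List.mem_map] at he
      obtain ⟨b, hb, rfl⟩ := he
      obtain ⟨c'', hc'', hb''⟩ := mem_distribL hd (List.mem_of_mem_filter hb)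
      exact ih h c'' hc'' b hb''

lemma den_congr (F : Frame Λ) : ∀ (E : LExp Λ) (g g' : ℕ → F.W),
    (∀ i ∈ E.evars, g i = g' i) → E.den F g = E.den F g' := by
  intro E
  induction E with
  | var i => intro g g' h; simp only [LExp.den]; rw [h i (by simp [LExp.evars])]
  | top => intro g g' _; rfl
  | bot => intro g g' _; rfl
  | inter a b iha ihb =>
    intro g g' h
    simp only [LExp.den]
    rw [iha g g' fun i hi => h i (Or.inl hi), ihb g g' fun i hi => h i (Or.inr hi)]
  | union a b iha ihb =>
    intro g g' h
    simp only [LExp.den]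
    rw [iha g g' fun i hi => h i (Or.inl hi), ihb g g' fun i hi => h i (Or.inr hi)]
  | rinv l a iha => intro g g' h; simp only [LExp.den]; rw [iha g g' h]
  | rbox l a iha => intro g g' h; simp only [LExp.den]; rw [iha g g' h]
  | rfw l a iha => intro g g' h; simp only [LExp.den]; rw [iha g g' h]

lemma den_update (F : Frame Λ) {E : LExp Λ} {y : ℕ} (h : y ∉ E.evars) (g : ℕ → F.W)
    (w : F.W) : E.den F (Function.update g y w) = E.den F g := by
  refine den_congr F E _ _ fun i hi => ?_
  by_cases hiy : i = y
  · subst hiy; exact absurd hi h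
  · exact Function.update_of_ne hiy w g

lemma mem_den_interListE (F : Frame Λ) (g : ℕ → F.W) (w : F.W) :
    ∀ L : List (LExp Λ), (w ∈ (interListE L).den F g ↔ ∀ e ∈ L, w ∈ e.den F g) := by
  intro L
  induction L with
  | nil => simp [interListE, LExp.den]
  | cons e L ih =>
    simp only [interListE, LExp.den, Set.mem_inter_iff, ih, List.mem_cons]
    constructor
    · rintro ⟨h1, h2⟩ e' (rfl | he') ; exact h1; exact h2 e' he'
    · intro h; exact ⟨h e (Or.inl rfl), fun e' he' => h e' (Or.inr he')⟩

lemma mem_den_unionList (F : Frame Λ) (g : ℕ → F.W) (w : F.W) :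
    ∀ L : List (LExp Λ), (w ∈ (unionList L).den F g ↔ ∃ e ∈ L, w ∈ e.den F g) := by
  intro L
  induction L with
  | nil => simp [unionList, LExp.den]
  | cons e L ih =>
    simp only [unionList, LExp.den, Set.mem_union, ih, List.mem_cons]
    constructor
    · rintro (h | ⟨e', he', h⟩)
      · exact ⟨e, Or.inl rfl, h⟩
      · exact ⟨e', Or.inr he', h⟩
    · rintro ⟨e', (rfl | he'), h⟩
      · exact Or.inl h
      · exact Or.inr ⟨e', he', h⟩

lemma exStep_correct (F : Frame Λ) (g : ℕ → F.W) {U : Set ℕ} {y x : ℕ} {l : Λ}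
    (hyU : y ∉ U) (hxy : x ≠ y) (c : List (ℕ × LExp Λ))
    (hc : ∀ a ∈ c, LExp.evars a.2 ⊆ U) :
    (∃ w, F.R l (g x) w ∧ holdsC F (Function.update g y w) c) ↔
      holdsC F g (exStep y l x c) := by
  have hden : ∀ w, ∀ a ∈ c, LExp.den F (Function.update g y w) a.2 = LExp.den F g a.2 :=
    fun w a ha => den_update F (fun h => hyU (hc a ha h)) g w
  constructor
  · rintro ⟨w, hR, hsat⟩
    intro a ha
    rcases List.mem_append.1 ha with h' | h'
    · have hne : a.1 ≠ y := by
        have := (List.mem_filter.1 h').2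
        simpa using this
      have := hsat a (List.mem_of_mem_filter h')
      rwa [hden w a (List.mem_of_mem_filter h'), Function.update_of_ne hne] at this
    · simp only [List.mem_singleton] at h'
      subst h'
      simp only [LExp.den, Rinv, Set.mem_setOf_eq]
      refine ⟨w, hR, ?_⟩
      rw [mem_den_interListE]
      intro e he
      simp only [List.mem_map] at he
      obtain ⟨b, hb, rfl⟩ := he
      have heq : b.1 = y := by
        have := (List.mem_filter.1 hb).2
        simpa using this
      have := hsat b (List.mem_of_mem_filter hb)
      rwa [hden w b (List.mem_of_mem_filter hb), heq, Function.update_self] at this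
  · intro h
    have hx := h (x, .rinv l (interListE ((c.filter fun a => a.1 == y).map (·.2))))
      (List.mem_append.2 (Or.inr (List.mem_singleton.2 rfl)))
    simp only [LExp.den, Rinv, Set.mem_setOf_eq] at hx
    obtain ⟨w, hR, hw⟩ := hx
    refine ⟨w, hR, fun a ha => ?_⟩
    rw [hden w a ha]
    by_cases hay : a.1 = y
    · rw [hay, Function.update_self]
      rw [mem_den_interListE] at hw
      exact hw a.2 (List.mem_map.2 ⟨a, List.mem_filter.2 ⟨ha, by simp [hay]⟩, rfl⟩)
    · rw [Function.update_of_ne hay]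
      exact h a (List.mem_append.2 (Or.inl (List.mem_filter.2 ⟨ha, by simp [hay]⟩)))

lemma allStep_correct (F : Frame Λ) (g : ℕ → F.W) {U : Set ℕ} {y x : ℕ} {l : Λ}
    (hyU : y ∉ U) (hxy : x ≠ y) (c : List (ℕ × LExp Λ))
    (hc : ∀ a ∈ c, LExp.evars a.2 ⊆ U) :
    (∀ w, F.R l (g x) w → holdsCl F (Function.update g y w) c) ↔
      holdsCl F g (allStep y l x c) := by
  have hden : ∀ w, ∀ a ∈ c, LExp.den F (Function.update g y w) a.2 = LExp.den F g a.2 :=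
    fun w a ha => den_update F (fun h => hyU (hc a ha h)) g w
  constructor
  · intro h
    by_cases hfin : ∃ a ∈ c, a.1 ≠ y ∧ g a.1 ∈ a.2.den F g
    · obtain ⟨a, ha, hay, hsat⟩ := hfin
      exact ⟨a, List.mem_append.2 (Or.inl (List.mem_filter.2 ⟨ha, by simp [hay]⟩)), hsat⟩
    · push_neg at hfin
      refine ⟨(x, .rbox l (unionList ((c.filter fun a => a.1 == y).map (·.2)))),
        List.mem_append.2 (Or.inr (List.mem_singleton.2 rfl)), ?_⟩
      simp only [LExp.den, RboxOp, Set.mem_setOf_eq]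
      intro w hR
      rw [mem_den_unionList]
      obtain ⟨a, ha, hsat⟩ := h w hR
      rw [hden w a ha] at hsat
      by_cases hay : a.1 = y
      · rw [hay, Function.update_self] at hsat
        exact ⟨a.2, List.mem_map.2 ⟨a, List.mem_filter.2 ⟨ha, by simp [hay]⟩, rfl⟩, hsat⟩
      · rw [Function.update_of_ne hay] at hsat
        exact absurd hsat (hfin a ha hay)
  · rintro ⟨a, ha, hsat⟩ w hR
    rcases List.mem_append.1 ha with h' | h'
    · have hay : a.1 ≠ y := by
        have := (List.mem_filter.1 h').2
        simpa using this
      refine ⟨a, List.mem_of_mem_filter h', ?_⟩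
      rw [hden w a (List.mem_of_mem_filter h'), Function.update_of_ne hay]
      exact hsat
    · simp only [List.mem_singleton] at h'
      subst h'
      simp only [LExp.den, RboxOp, Set.mem_setOf_eq] at hsat
      have := hsat w hR
      rw [mem_den_unionList] at this
      obtain ⟨e, he, hwe⟩ := this
      simp only [List.mem_map] at he
      obtain ⟨b, hb, rfl⟩ := he
      have heq : b.1 = y := by
        have := (List.mem_filter.1 hb).2
        simpa using this
      refine ⟨b, List.mem_of_mem_filter hb, ?_⟩
      rw [hden w b (List.mem_of_mem_filter hb), heq, Function.update_self]
      exact hwe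

lemma goodK_evars {U : Set ℕ} : ∀ {φ : KrF Λ}, GoodK U φ →
    φ.AtomsAll fun E => LExp.evars E ⊆ U := by
  intro φ h
  induction h with
  | atom h => exact h
  | and _ _ iha ihb => exact ⟨iha, ihb⟩
  | or _ _ iha ihb => exact ⟨iha, ihb⟩
  | all _ _ _ ih => exact ih
  | ex _ _ _ ih => exact ih

lemma elimD_correct (F : Frame Λ) {U : Set ℕ} :
    ∀ {φ : KrF Λ}, GoodK U φ → ∀ g : ℕ → F.W,
      (KrF.holds F g φ ↔ holdsD F g (elimD φ)) := by
  intro φ hG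
  induction hG with
  | @atom y E hE =>
    intro g
    simp [KrF.holds, elimD, holdsD, holdsC]
  | @and a b ha hb iha ihb =>
    intro g
    simp only [KrF.holds, elimD, holdsD, iha g, ihb g]
    constructor
    · rintro ⟨⟨c₁, hc₁, h₁⟩, ⟨c₂, hc₂, h₂⟩⟩
      refine ⟨c₁ ++ c₂, ?_, ?_⟩
      · simp only [List.mem_flatMap, List.mem_map]
        exact ⟨c₁, hc₁, c₂, hc₂, rfl⟩
      · intro x hx
        rcases List.mem_append.1 hx with h' | h'
        · exact h₁ x h'
        · exact h₂ x h'
    · rintro ⟨c, hc, h⟩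
      simp only [List.mem_flatMap, List.mem_map] at hc
      obtain ⟨c₁, hc₁, c₂, hc₂, rfl⟩ := hc
      exact ⟨⟨c₁, hc₁, fun x hx => h x (List.mem_append.2 (Or.inl hx))⟩,
        ⟨c₂, hc₂, fun x hx => h x (List.mem_append.2 (Or.inr hx))⟩⟩
  | @or a b ha hb iha ihb =>
    intro g
    simp only [KrF.holds, elimD, holdsD, iha g, ihb g]
    constructor
    · rintro (⟨c, hc, h⟩ | ⟨c, hc, h⟩)
      · exact ⟨c, List.mem_append.2 (Or.inl hc), h⟩
      · exact ⟨c, List.mem_append.2 (Or.inr hc), h⟩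
    · rintro ⟨c, hc, h⟩
      rcases List.mem_append.1 hc with h' | h'
      · exact Or.inl ⟨c, h', h⟩
      · exact Or.inr ⟨c, h', h⟩
  | @all y l x β hyU hxy hβ ih =>
    intro g
    have hatoms : ∀ c ∈ distribL (elimD β), ∀ a ∈ c, LExp.evars a.2 ⊆ U := by
      intro c hc a ha
      obtain ⟨c', hc', ha'⟩ := mem_distribL hc ha
      exact elimD_atoms (Q := fun E => LExp.evars E ⊆ U) (by simp [LExp.evars]) (by simp [LExp.evars])
        (fun {a b} h1 h2 => Set.union_subset h1 h2) (fun {a b} h1 h2 => Set.union_subset h1 h2)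
        (fun l' {a} h => h) (fun l' {a} h => h) (goodK_evars hβ) c' hc' a ha'
    calc KrF.holds F g (.all y l x β)
        ↔ ∀ w, F.R l (g x) w → holdsD F (Function.update g y w) (elimD β) := by
          simp only [KrF.holds]
          exact forall_congr' fun w => imp_congr_right fun _ => ih _
      _ ↔ ∀ w, F.R l (g x) w → holdsCN F (Function.update g y w) (distribL (elimD β)) := by
          exact forall_congr' fun w => imp_congr_right fun _ =>
            (holdsCN_distribL F _ _).symm
      _ ↔ ∀ c ∈ distribL (elimD β), ∀ w, F.R l (g x) w →
            holdsCl F (Function.update g y w) c := by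
          constructor
          · intro h c hc w hw; exact h w hw c hc
          · intro h w hw c hc; exact h c hc w hw
      _ ↔ ∀ c ∈ distribL (elimD β), holdsCl F g (allStep y l x c) := by
          refine forall_congr' fun c => forall_congr' fun hc => ?_
          exact allStep_correct F g hyU hxy c (hatoms c hc)
      _ ↔ holdsCN F g ((distribL (elimD β)).map (allStep y l x)) := by
          simp only [holdsCN, List.forall_mem_map]
      _ ↔ holdsD F g (elimD (.all y l x β)) := by
          simp only [elimD]
          exact (holdsD_distribL F g _).symm
  | @ex y l x β hyU hxy hβ ih =>
    intro g
    have hatoms : ∀ c ∈ elimD β, ∀ a ∈ c, LExp.evars a.2 ⊆ U :=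
      elimD_atoms (Q := fun E => LExp.evars E ⊆ U) (by simp [LExp.evars]) (by simp [LExp.evars])
        (fun {a b} h1 h2 => Set.union_subset h1 h2) (fun {a b} h1 h2 => Set.union_subset h1 h2)
        (fun l' {a} h => h) (fun l' {a} h => h) (goodK_evars hβ)
    calc KrF.holds F g (.ex y l x β)
        ↔ ∃ w, F.R l (g x) w ∧ holdsD F (Function.update g y w) (elimD β) := by
          simp only [KrF.holds]
          exact exists_congr fun w => and_congr_right fun _ => ih _
      _ ↔ ∃ c ∈ elimD β, ∃ w, F.R l (g x) w ∧ holdsC F (Function.update g y w) c := by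
          simp only [holdsD]
          constructor
          · rintro ⟨w, hw, c, hc, h⟩; exact ⟨c, hc, w, hw, h⟩
          · rintro ⟨c, hc, w, hw, h⟩; exact ⟨w, hw, c, hc, h⟩
      _ ↔ ∃ c ∈ elimD β, holdsC F g (exStep y l x c) := by
          refine exists_congr fun c => ?_
          constructor
          · rintro ⟨hc, h⟩
            exact ⟨hc, (exStep_correct F g hyU hxy c (hatoms c hc)).1 h⟩
          · rintro ⟨hc, h⟩
            exact ⟨hc, (exStep_correct F g hyU hxy c (hatoms c hc)).2 h⟩
      _ ↔ holdsD F g (elimD (.ex y l x β)) := by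
          simp only [elimD, holdsD]
          constructor
          · rintro ⟨c, hc, h⟩; exact ⟨exStep y l x c, List.mem_map.2 ⟨c, hc, rfl⟩, h⟩
          · rintro ⟨c', hc', h⟩
            obtain ⟨c, hc, rfl⟩ := List.mem_map.1 hc'
            exact ⟨c, hc, h⟩

/-- Conversion of a conjunction of atoms back to a formula. -/
def ofConj : List (ℕ × LExp Λ) → KrF Λ
  | [] => .atom 0 .top
  | a :: c => .and (.atom a.1 a.2) (ofConj c)

/-- Conversion of a DNF back to a formula. -/
def ofDNF : List (List (ℕ × LExp Λ)) → KrF Λ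
  | [] => .atom 0 .bot
  | c :: D => .or (ofConj c) (ofDNF D)

lemma ofConj_qfree : ∀ c : List (ℕ × LExp Λ), (ofConj c).QFree := by
  intro c
  induction c with
  | nil => trivial
  | cons a c ih => exact ⟨trivial, ih⟩

lemma ofDNF_qfree : ∀ D : List (List (ℕ × LExp Λ)), (ofDNF D).QFree := by
  intro D
  induction D with
  | nil => trivial
  | cons c D ih => exact ⟨ofConj_qfree c, ih⟩

lemma ofConj_atoms {Q : LExp Λ → Prop} (htop : Q .top) :
    ∀ c : List (ℕ × LExp Λ), (∀ a ∈ c, Q a.2) → (ofConj c).AtomsAll Q := by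
  intro c
  induction c with
  | nil => intro _; exact htop
  | cons a c ih =>
    intro h
    exact ⟨h a (List.mem_cons_self), ih fun b hb => h b (List.mem_cons_of_mem _ hb)⟩

lemma ofDNF_atoms {Q : LExp Λ → Prop} (htop : Q .top) (hbot : Q .bot) :
    ∀ D : List (List (ℕ × LExp Λ)), (∀ c ∈ D, ∀ a ∈ c, Q a.2) → (ofDNF D).AtomsAll Q := by
  intro D
  induction D with
  | nil => intro _; exact hbot
  | cons c D ih =>
    intro h
    exact ⟨ofConj_atoms htop c (h c (List.mem_cons_self)),
      ih fun d hd => h d (List.mem_cons_of_mem _ hd)⟩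

lemma ofConj_holds (F : Frame Λ) (g : ℕ → F.W) :
    ∀ c : List (ℕ × LExp Λ), (KrF.holds F g (ofConj c) ↔ holdsC F g c) := by
  intro c
  induction c with
  | nil => simp [ofConj, KrF.holds, holdsC, LExp.den]
  | cons a c ih =>
    simp only [ofConj, KrF.holds, ih, holdsC, List.mem_cons]
    constructor
    · rintro ⟨h1, h2⟩ b (rfl | hb); exact h1; exact h2 b hb
    · intro h; exact ⟨h a (Or.inl rfl), fun b hb => h b (Or.inr hb)⟩

lemma ofDNF_holds (F : Frame Λ) (g : ℕ → F.W) :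
    ∀ D : List (List (ℕ × LExp Λ)), (KrF.holds F g (ofDNF D) ↔ holdsD F g D) := by
  intro D
  induction D with
  | nil => simp [ofDNF, KrF.holds, holdsD, LExp.den]
  | cons c D ih =>
    simp only [ofDNF, KrF.holds, ofConj_holds, ih, holdsD, List.mem_cons]
    constructor
    · rintro (h | ⟨d, hd, h⟩)
      · exact ⟨c, Or.inl rfl, h⟩
      · exact ⟨d, Or.inr hd, h⟩
    · rintro ⟨d, (rfl | hd), h⟩
      · exact Or.inl h
      · exact Or.inr ⟨d, hd, h⟩

lemma gkok_true_atoms {U : Set ℕ} : ∀ {φ : KrF Λ}, KrF.GKok U true φ →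
    φ.AtomsAll fun E => LExp.evars E ⊆ U := by
  intro φ
  induction φ with
  | atom y E => intro h; exact h
  | and a b iha ihb => intro h; exact ⟨iha h.1, ihb h.2⟩
  | or a b iha ihb => intro h; exact ⟨iha h.1, ihb h.2⟩
  | all y l x β ih => intro h; exact ih h
  | ex y l x β ih => intro h; exact ih h

lemma goodK_of_clean {U : Set ℕ} : ∀ (φ : KrF Λ) (V : Set ℕ), KrF.CleanBound φ →
    KrF.fv φ ⊆ V → V ∩ KrF.bv φ = ∅ → U ⊆ V →
    φ.AtomsAll (fun E => LExp.evars E ⊆ U) → GoodK U φ := by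
  intro φ
  induction φ with
  | atom y E => intro V _ _ _ _ hA; exact GoodK.atom hA
  | and a b iha ihb =>
    intro V hcb hfv hbv hUV hA
    refine GoodK.and (iha V hcb.1 (fun i hi => hfv (Or.inl hi)) ?_ hUV hA.1)
      (ihb V hcb.2.1 (fun i hi => hfv (Or.inr hi)) ?_ hUV hA.2)
    · apply Set.eq_empty_of_subset_empty
      intro i hi
      rw [← hbv]
      exact ⟨hi.1, Or.inl hi.2⟩
    · apply Set.eq_empty_of_subset_empty
      intro i hi
      rw [← hbv]
      exact ⟨hi.1, Or.inr hi.2⟩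
  | or a b iha ihb =>
    intro V hcb hfv hbv hUV hA
    refine GoodK.or (iha V hcb.1 (fun i hi => hfv (Or.inl hi)) ?_ hUV hA.1)
      (ihb V hcb.2.1 (fun i hi => hfv (Or.inr hi)) ?_ hUV hA.2)
    · apply Set.eq_empty_of_subset_empty
      intro i hi
      rw [← hbv]
      exact ⟨hi.1, Or.inl hi.2⟩
    · apply Set.eq_empty_of_subset_empty
      intro i hi
      rw [← hbv]
      exact ⟨hi.1, Or.inr hi.2⟩
  | all y l x β ih =>
    intro V hcb hfv hbv hUV hA
    have hyV : y ∉ V := by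
      intro hyV
      have : y ∈ V ∩ KrF.bv (.all y l x β) := ⟨hyV, Or.inl rfl⟩
      rw [hbv] at this
      exact this
    have hxV : x ∈ V := hfv (Or.inl rfl)
    refine GoodK.all (fun h => hyV (hUV h)) (fun h => hyV (h ▸ hxV)) ?_
    refine ih (insert y V) hcb.1 ?_ ?_ (fun i hi => Or.inr (hUV hi)) hA
    · intro i hi
      by_cases hiy : i = y
      · exact Or.inl hiy
      · exact Or.inr (hfv (Or.inr ⟨hi, hiy⟩))
    · apply Set.eq_empty_of_subset_empty
      rintro i ⟨(rfl | hiV), hib⟩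
      · exact hcb.2 hib
      · rw [← hbv]; exact ⟨hiV, Or.inr hib⟩
  | ex y l x β ih =>
    intro V hcb hfv hbv hUV hA
    have hyV : y ∉ V := by
      intro hyV
      have : y ∈ V ∩ KrF.bv (.ex y l x β) := ⟨hyV, Or.inl rfl⟩
      rw [hbv] at this
      exact this
    have hxV : x ∈ V := hfv (Or.inl rfl)
    refine GoodK.ex (fun h => hyV (hUV h)) (fun h => hyV (h ▸ hxV)) ?_
    refine ih (insert y V) hcb.1 ?_ ?_ (fun i hi => Or.inr (hUV hi)) hA
    · intro i hi
      by_cases hiy : i = y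
      · exact Or.inl hiy
      · exact Or.inr (hfv (Or.inr ⟨hi, hiy⟩))
    · apply Set.eq_empty_of_subset_empty
      rintro i ⟨(rfl | hiV), hib⟩
      · exact hcb.2 hib
      · rw [← hbv]; exact ⟨hiV, Or.inr hib⟩

lemma atomsAll_mono {P Q : LExp Λ → Prop} (h : ∀ {E}, P E → Q E) :
    ∀ {φ : KrF Λ}, φ.AtomsAll P → φ.AtomsAll Q := by
  intro φ
  induction φ with
  | atom y E => exact fun hp => h hp
  | and a b iha ihb => exact fun hp => ⟨iha hp.1, ihb hp.2⟩
  | or a b iha ihb => exact fun hp => ⟨iha hp.1, ihb hp.2⟩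
  | all y l x β ih => exact fun hp => ih hp
  | ex y l x β ih => exact fun hp => ih hp

end Statement16Aux

/-- a generalized Kracht formula beginning with an existential restricted
quantifier is equivalent, in every Kripke frame under every assignment of its free
variable, to a quantifier-free formula built from quasi-safe atoms using only `∧` and `∨`. -/
theorem statement16 {Λ : Type u} (ψ : KrF Λ) (x₀ : ℕ)
    (h₁ : IsGenKracht ψ x₀)
    (h₂ : ∃ (y : ℕ) (l : Λ) (x : ℕ) (β : KrF Λ), ψ = KrF.ex y l x β) :
    ∃ ψ' : KrF Λ, ψ'.QFree ∧ ψ'.AtomsAll QuasiSafe ∧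
      ∀ (F : Frame Λ) (g : ℕ → F.W), KrF.holds F g ψ ↔ KrF.holds F g ψ' := by
  obtain ⟨⟨hClean, hSafe, hGK⟩, hfv⟩ := h₁
  obtain ⟨y, l, x, β, rfl⟩ := h₂
  rw [hfv] at hGK
  have hGKtrue : KrF.GKok {x₀} true β := hGK
  have hA : (KrF.ex y l x β).AtomsAll (fun E => LExp.evars E ⊆ ({x₀} : Set ℕ)) :=
    gkok_true_atoms hGKtrue
  have hGood : GoodK {x₀} (KrF.ex y l x β) := by
    refine goodK_of_clean _ ({x₀} : Set ℕ) hClean.2 (hfv ▸ le_refl _) ?_ (le_refl _) hA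
    rw [← hfv]; exact hClean.1
  refine ⟨ofDNF (elimD (KrF.ex y l x β)), ofDNF_qfree _, ?_, ?_⟩
  · refine ofDNF_atoms QuasiSafe.top QuasiSafe.bot _ ?_
    refine elimD_atoms QuasiSafe.top QuasiSafe.bot
      (fun {a b} h1 h2 => QuasiSafe.inter h1 h2) (fun {a b} h1 h2 => QuasiSafe.union h1 h2)
      (fun l' {a} h => QuasiSafe.rinv l' h) (fun l' {a} h => QuasiSafe.rbox l' h) ?_
    exact atomsAll_mono (fun h => QuasiSafe.safe h) hSafe
  · intro F g
    exact (elimD_correct F hGood g).trans (ofDNF_holds F g _).symm
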